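/- Let Γ = A *_C B and let x, y ∈ Γ be commuting elements. If neither x nor y lies in a conjugate of C, and x lies in a conjugate g F g^{-1} of a factor F ∈ {A, B}, then y lies in the same conjugate g F g^{-1} of the same factor. -/

import Mathlib

/-!
Internal characterization of the amalgamated free product `Γ = A *_C B`:
`A` and `B` are subgroups of `Γ` generating `Γ`, the amalgamated subgroup is
`C = A ⊓ B`, and (normal form theorem) the product of any nonempty reduced
sequence is nontrivial.
-/

variable {Γ : Type*} [Group Γ]

/-- `x` and `y` lie in different factors among `A`, `B`. -/
def DiffFactors (A B : Subgroup Γ) (x y : Γ) : Prop :=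
  ¬(x ∈ A ∧ y ∈ A) ∧ ¬(x ∈ B ∧ y ∈ B)

/-- A reduced sequence: every entry lies in `(A ∪ B) \ (A ⊓ B)` and consecutive
entries lie in different factors. -/
def ReducedSeq (A B : Subgroup Γ) (l : List Γ) : Prop :=
  (∀ g ∈ l, (g ∈ A ∨ g ∈ B) ∧ ¬(g ∈ A ∧ g ∈ B)) ∧ l.Chain' (DiffFactors A B)

/-- `Γ` is the amalgamated free product of its subgroups `A` and `B`
along `C = A ⊓ B`. -/
def IsAmalgam (A B : Subgroup Γ) : Prop :=
  A ⊔ B = ⊤ ∧ ∀ l : List Γ, ReducedSeq A B l → l ≠ [] → l.prod ≠ 1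

/-- `g` is cyclically reduced: it has length 1 (it lies in a factor), or it has
a reduced form of length `≥ 2` whose first and last entries lie in different
factors. -/
def AmCyclicallyReduced (A B : Subgroup Γ) (g : Γ) : Prop :=
  (g ∈ A ∨ g ∈ B) ∨
    ∃ l : List Γ, ReducedSeq A B l ∧ l.prod = g ∧ 2 ≤ l.length ∧
      ∃ x y, l.head? = some x ∧ l.getLast? = some y ∧ DiffFactors A B x y

namespace AmAux

variable {A B : Subgroup Γ}

lemma diff_symm {x y : Γ} (h : DiffFactors A B x y) : DiffFactors A B y x :=
  ⟨fun ⟨h1, h2⟩ => h.1 ⟨h2, h1⟩, fun ⟨h1, h2⟩ => h.2 ⟨h2, h1⟩⟩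

lemma diff_swap {x y : Γ} (h : DiffFactors A B x y) : DiffFactors B A x y :=
  ⟨h.2, h.1⟩

lemma diff_congr_left {x x' y : Γ} (hA : x ∈ A ↔ x' ∈ A) (hB : x ∈ B ↔ x' ∈ B)
    (h : DiffFactors A B x y) : DiffFactors A B x' y :=
  ⟨fun ⟨h1, h2⟩ => h.1 ⟨hA.2 h1, h2⟩, fun ⟨h1, h2⟩ => h.2 ⟨hB.2 h1, h2⟩⟩

lemma red_tail {g : Γ} {t : List Γ} (h : ReducedSeq A B (g :: t)) : ReducedSeq A B t :=
  ⟨fun x hx => h.1 x (List.mem_cons_of_mem _ hx), h.2.tail⟩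

lemma red_replace_head {g g' : Γ} {t : List Γ} (h : ReducedSeq A B (g :: t))
    (hA : g ∈ A ↔ g' ∈ A) (hB : g ∈ B ↔ g' ∈ B) : ReducedSeq A B (g' :: t) := by
  obtain ⟨hmem, hch⟩ := h
  constructor
  · intro x hx
    rcases List.mem_cons.1 hx with rfl | hx
    · have hg := hmem g (List.mem_cons_self)
      exact ⟨hg.1.imp hA.1 hB.1, fun ⟨h1, h2⟩ => hg.2 ⟨hA.2 h1, hB.2 h2⟩⟩
    · exact hmem x (List.mem_cons_of_mem _ hx)
  · unfold List.Chain' at hch ⊢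
    rw [List.isChain_cons] at hch ⊢
    exact ⟨fun y hy => diff_congr_left hA hB (hch.1 y hy), hch.2⟩

lemma red_cons' {g h1 : Γ} {t : List Γ} (hl : ReducedSeq A B (h1 :: t))
    (hg : (g ∈ A ∨ g ∈ B) ∧ ¬(g ∈ A ∧ g ∈ B)) (hd : DiffFactors A B g h1) :
    ReducedSeq A B (g :: h1 :: t) := by
  refine ⟨?_, List.isChain_cons_cons.2 ⟨hd, hl.2⟩⟩
  intro y hy
  rcases List.mem_cons.1 hy with rfl | hy
  · exact hg
  · exact hl.1 y hy

lemma red_swap {l : List Γ} (h : ReducedSeq A B l) : ReducedSeq B A l :=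
  ⟨fun g hg => ⟨(h.1 g hg).1.symm, fun ⟨h1, h2⟩ => (h.1 g hg).2 ⟨h2, h1⟩⟩,
   h.2.imp fun _ _ => diff_swap⟩

lemma amalgam_swap (h : IsAmalgam A B) : IsAmalgam B A :=
  ⟨by rw [sup_comm]; exact h.1, fun l hl => h.2 l (red_swap hl)⟩

/-- Normal form: a reduced sequence of length ≥ 2 has product outside `A`. -/
lemma prod_not_mem_left (hAB : IsAmalgam A B) {l : List Γ} (hl : ReducedSeq A B l)
    (h2 : 2 ≤ l.length) : l.prod ∉ A := by
  intro ha
  obtain ⟨g1, t, rfl, ht⟩ : ∃ g1 t, l = g1 :: t ∧ t ≠ [] := by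
    match l, h2 with
    | g1 :: g2 :: t, _ => exact ⟨g1, g2 :: t, rfl, by simp⟩
  set a := (g1 :: t).prod with hadef
  have hg1 := hl.1 g1 (List.mem_cons_self)
  by_cases hab : a ∈ B
  · -- a ∈ C : absorb into the first letter
    refine hAB.2 ((a⁻¹ * g1) :: t) ?_ (by simp) ?_
    · exact red_replace_head hl (mul_mem_cancel_left (inv_mem ha)).symm
        (mul_mem_cancel_left (inv_mem hab)).symm
    · rw [List.prod_cons, mul_assoc, ← List.prod_cons, ← hadef, inv_mul_cancel]
  · by_cases hg1B : g1 ∈ B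
    · have hg1A : g1 ∉ A := fun h => hg1.2 ⟨h, hg1B⟩
      refine hAB.2 (a⁻¹ :: g1 :: t) ?_ (by simp) ?_
      · exact red_cons' hl ⟨Or.inl (inv_mem ha), fun ⟨_, h2'⟩ => hab (inv_mem_iff.1 h2')⟩
          ⟨fun ⟨_, h⟩ => hg1A h, fun ⟨h, _⟩ => hab (inv_mem_iff.1 h)⟩
      · rw [List.prod_cons, ← hadef, inv_mul_cancel]
    · have hg1A : g1 ∈ A := hg1.1.resolve_right hg1B
      by_cases hbB : a⁻¹ * g1 ∈ B
      · -- a⁻¹ g1 ∈ C : absorb into the second letter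
        obtain ⟨g2, t', rfl⟩ : ∃ g2 t', t = g2 :: t' := by
          cases t with
          | nil => exact absurd rfl ht
          | cons g2 t' => exact ⟨g2, t', rfl⟩
        have hch : DiffFactors A B g1 g2 := (List.isChain_cons_cons.1 hl.2).1
        have hg2 := hl.1 g2 (by simp)
        have hg2A : g2 ∉ A := fun h => hch.1 ⟨hg1A, h⟩
        have hg2B : g2 ∈ B := hg2.1.resolve_left hg2A
        have hbA : a⁻¹ * g1 ∈ A := mul_mem (inv_mem ha) hg1A
        refine hAB.2 ((a⁻¹ * g1 * g2) :: t') ?_ (by simp) ?_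
        · exact red_replace_head (red_tail hl) (mul_mem_cancel_left hbA).symm
            (mul_mem_cancel_left hbB).symm
        · rw [List.prod_cons, mul_assoc, mul_assoc, ← List.prod_cons, ← List.prod_cons,
            ← hadef, inv_mul_cancel]
      · refine hAB.2 ((a⁻¹ * g1) :: t) ?_ (by simp) ?_
        · exact red_replace_head hl (mul_mem_cancel_left (inv_mem ha)).symm
            (iff_of_false (fun h => hg1.2 ⟨hg1A, h⟩) hbB)
        · rw [List.prod_cons, mul_assoc, ← List.prod_cons, ← hadef, inv_mul_cancel]

lemma prod_not_mem_right (hAB : IsAmalgam A B) {l : List Γ} (hl : ReducedSeq A B l)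
    (h2 : 2 ≤ l.length) : l.prod ∉ B :=
  prod_not_mem_left (amalgam_swap hAB) (red_swap hl) h2

end AmAux

namespace AmAux

variable {A B : Subgroup Γ}

/-- the normal-form predicate used below -/
def HasForm (A B : Subgroup Γ) (g : Γ) : Prop :=
  g ∈ A ⊓ B ∨ ∃ l : List Γ, ReducedSeq A B l ∧ l ≠ [] ∧ l.prod = g

lemma hasForm_swap {g : Γ} (h : HasForm A B g) : HasForm B A g := by
  rcases h with h | ⟨l, hl, hne, hp⟩
  · left
    rw [Subgroup.mem_inf] at h ⊢
    exact ⟨h.2, h.1⟩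
  · exact Or.inr ⟨l, red_swap hl, hne, hp⟩

lemma stepA (hAB : IsAmalgam A B) {x h : Γ} (hx : x ∈ A) (ih : HasForm A B h) :
    HasForm A B (x * h) := by
  rcases ih with hC | ⟨l, hl, hne, rfl⟩
  · rw [Subgroup.mem_inf] at hC
    have hxh : x * h ∈ A := mul_mem hx hC.1
    by_cases hb : x * h ∈ B
    · exact Or.inl (Subgroup.mem_inf.2 ⟨hxh, hb⟩)
    · refine Or.inr ⟨[x * h], ⟨?_, List.isChain_singleton _⟩, by simp, by simp⟩
      rintro g hg
      rw [List.mem_singleton] at hg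
      subst hg
      exact ⟨Or.inl hxh, fun ⟨_, h2⟩ => hb h2⟩
  · obtain ⟨h1, t, rfl⟩ := List.exists_cons_of_ne_nil hne
    have hh1 := hl.1 h1 (List.mem_cons_self)
    by_cases h1B : h1 ∈ B
    · have h1A : h1 ∉ A := fun hh => hh1.2 ⟨hh, h1B⟩
      by_cases hxB : x ∈ B
      · refine Or.inr ⟨(x * h1) :: t,
          red_replace_head hl (mul_mem_cancel_left hx).symm (mul_mem_cancel_left hxB).symm,
          by simp, by rw [List.prod_cons, List.prod_cons, mul_assoc]⟩
      · refine Or.inr ⟨x :: h1 :: t,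
          red_cons' hl ⟨Or.inl hx, fun ⟨_, h2⟩ => hxB h2⟩
            ⟨fun ⟨_, h2⟩ => h1A h2, fun ⟨h1', _⟩ => hxB h1'⟩,
          by simp, by rw [List.prod_cons]⟩
    · have h1A : h1 ∈ A := hh1.1.resolve_right h1B
      by_cases hw : x * h1 ∈ B
      · -- x * h1 ∈ C
        cases t with
        | nil =>
          left
          rw [Subgroup.mem_inf]
          constructor
          · simpa [← mul_assoc] using mul_mem hx h1A
          · simpa [← mul_assoc] using hw
        | cons h2 t' =>
          have hch : DiffFactors A B h1 h2 := (List.isChain_cons_cons.1 hl.2).1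
          have hh2 := hl.1 h2 (by simp)
          have h2A : h2 ∉ A := fun hh => hch.1 ⟨h1A, hh⟩
          have h2B : h2 ∈ B := hh2.1.resolve_left h2A
          have hwA : x * h1 ∈ A := mul_mem hx h1A
          refine Or.inr ⟨(x * h1 * h2) :: t',
            red_replace_head (red_tail hl) (mul_mem_cancel_left hwA).symm
              (mul_mem_cancel_left hw).symm,
            by simp, ?_⟩
          simp [List.prod_cons, mul_assoc]
      · refine Or.inr ⟨(x * h1) :: t,
          red_replace_head hl (mul_mem_cancel_left hx).symm
            (iff_of_false (fun hh => hh1.2 ⟨h1A, hh⟩) hw),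
          by simp, by rw [List.prod_cons, List.prod_cons, mul_assoc]⟩

lemma step (hAB : IsAmalgam A B) {x h : Γ} (hx : x ∈ A ∨ x ∈ B) (ih : HasForm A B h) :
    HasForm A B (x * h) := by
  rcases hx with hx | hx
  · exact stepA hAB hx ih
  · exact hasForm_swap (stepA (amalgam_swap hAB) hx (hasForm_swap ih))

lemma exists_reduced (hAB : IsAmalgam A B) (g : Γ) : HasForm A B g := by
  have hg : g ∈ Subgroup.closure ((A : Set Γ) ∪ (B : Set Γ)) := by
    rw [← Subgroup.sup_eq_closure, hAB.1]
    trivial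
  induction hg using Subgroup.closure_induction_left with
  | one => exact Or.inl (Subgroup.one_mem _)
  | mul_left x hx y hy ih =>
    exact step hAB (by simpa using hx) ih
  | inv_mul_cancel x hx y hy ih =>
    refine step hAB ?_ ih
    rcases (by simpa using hx : x ∈ A ∨ x ∈ B) with h | h
    · exact Or.inl (inv_mem h)
    · exact Or.inr (inv_mem h)

end AmAux

namespace AmAux

variable {A B : Subgroup Γ}

lemma diff_inv_inv {x y : Γ} (h : DiffFactors A B x y) : DiffFactors A B y⁻¹ x⁻¹ :=
  ⟨fun ⟨h1, h2⟩ => h.1 ⟨inv_mem_iff.1 h2, inv_mem_iff.1 h1⟩,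
   fun ⟨h1, h2⟩ => h.2 ⟨inv_mem_iff.1 h2, inv_mem_iff.1 h1⟩⟩

lemma diff_inv_right {x y : Γ} (h : DiffFactors A B x y) : DiffFactors A B x y⁻¹ :=
  ⟨fun ⟨h1, h2⟩ => h.1 ⟨h1, inv_mem_iff.1 h2⟩, fun ⟨h1, h2⟩ => h.2 ⟨h1, inv_mem_iff.1 h2⟩⟩

/-- The conjugation word `l · a · (reverse of inverses of l)` is reduced provided the
last letter of `l` and `a` lie in different factors. -/
lemma red_conj {l : List Γ} {a : Γ} (hl : ReducedSeq A B l)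
    (ha : (a ∈ A ∨ a ∈ B) ∧ ¬(a ∈ A ∧ a ∈ B))
    (hlast : ∀ g, l.getLast? = some g → DiffFactors A B g a) :
    ReducedSeq A B (l ++ a :: l.reverse.map (·⁻¹)) := by
  constructor
  · intro y hy
    rcases List.mem_append.1 hy with hy | hy
    · exact hl.1 y hy
    · rcases List.mem_cons.1 hy with rfl | hy
      · exact ha
      · obtain ⟨g, hg, rfl⟩ := List.mem_map.1 hy
        have hg' := hl.1 g (List.mem_reverse.1 hg)
        exact ⟨hg'.1.imp inv_mem inv_mem,
          fun ⟨h1, h2⟩ => hg'.2 ⟨inv_mem_iff.1 h1, inv_mem_iff.1 h2⟩⟩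
  · unfold List.Chain'
    rw [List.isChain_append]
    refine ⟨hl.2, ?_, ?_⟩
    · rw [List.isChain_cons]
      constructor
      · intro y hy
        simp only [List.head?_map, List.head?_reverse, Option.mem_def,
          Option.map_eq_some_iff] at hy
        obtain ⟨g, hg, rfl⟩ := hy
        exact diff_inv_right (diff_symm (hlast g hg))
      · rw [List.map_reverse, List.isChain_reverse, List.isChain_map]
        exact hl.2.imp fun _ _ h => diff_inv_inv h
    · intro u hu v hv
      simp only [List.head?_cons, Option.mem_def, Option.some_inj] at hv
      subst hv
      exact hlast u hu

lemma prod_conj (l : List Γ) (a : Γ) :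
    (l ++ a :: l.reverse.map (·⁻¹)).prod = l.prod * a * l.prod⁻¹ := by
  have h : (l.reverse.map (·⁻¹)).prod = l.prod⁻¹ := by
    rw [List.map_reverse, ← List.prod_inv_reverse]
  rw [List.prod_append, List.prod_cons, h, mul_assoc]

lemma mem_left_of_commute (hAB : IsAmalgam A B) {x y : Γ} (hcomm : x * y = y * x)
    (hxC : ∀ g : Γ, ¬∃ c ∈ A ⊓ B, x = g * c * g⁻¹)
    (hyC : ∀ g : Γ, ¬∃ c ∈ A ⊓ B, y = g * c * g⁻¹)
    (hx : x ∈ A) : y ∈ A := by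
  have hxB : x ∉ B := fun h => hxC 1 ⟨x, Subgroup.mem_inf.2 ⟨hx, h⟩, by simp⟩
  have hxletter : (x ∈ A ∨ x ∈ B) ∧ ¬(x ∈ A ∧ x ∈ B) := ⟨Or.inl hx, fun ⟨_, h⟩ => hxB h⟩
  rcases exists_reduced hAB y with hyc | ⟨l, hl, hne, hprod⟩
  · exact absurd ⟨y, hyc, by simp⟩ (hyC 1)
  rcases l.eq_nil_or_concat with rfl | ⟨l', yn, rfl⟩
  · exact absurd rfl hne
  rw [List.concat_eq_append] at hl hne hprod
  have hyn := hl.1 yn (by simp)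
  rcases eq_or_ne l' [] with rfl | hl'nil
  · -- `y` is a single letter
    simp only [List.nil_append, List.prod_cons, List.prod_nil, mul_one] at hprod
    subst hprod
    by_cases hyA : yn ∈ A
    · exact hyA
    exfalso
    have hyB : yn ∈ B := hyn.1.resolve_left hyA
    have hred1 : ReducedSeq A B [x] := by
      refine ⟨?_, List.isChain_singleton _⟩
      intro g hg
      rw [List.mem_singleton] at hg
      subst hg
      exact hxletter
    have hword := red_conj hred1 ⟨Or.inr hyB, fun ⟨h, _⟩ => hyA h⟩
      (fun g hg => by
        simp only [List.getLast?_singleton, Option.some_inj] at hg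
        subst hg
        exact ⟨fun ⟨_, h⟩ => hyA h, fun ⟨h, _⟩ => hxB h⟩)
    refine prod_not_mem_right hAB hword (by simp) ?_
    have hp : ([x] ++ yn :: ([x].reverse.map (·⁻¹))).prod = yn := by
      rw [prod_conj, List.prod_singleton, hcomm, mul_inv_cancel_right]
    rw [hp]
    exact hyB
  · exfalso
    have hl'pos : 1 ≤ l'.length := List.length_pos_iff.2 hl'nil
    -- first show yn ∈ A
    have hynA : yn ∈ A := by
      by_contra hA'
      have hynB : yn ∈ B := hyn.1.resolve_left hA'
      have hword := red_conj hl hxletter (fun g hg => by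
        rw [List.getLast?_concat] at hg
        rw [Option.some_inj] at hg
        subst hg
        exact ⟨fun ⟨h, _⟩ => hA' h, fun ⟨_, h⟩ => hxB h⟩)
      refine prod_not_mem_left hAB hword (by simp; omega) ?_
      have hyx : (l' ++ [yn]).prod * x * (l' ++ [yn]).prod⁻¹ = x := by
        rw [hprod, ← hcomm, mul_inv_cancel_right]
      rw [prod_conj, hyx]
      exact hx
    have hynB : yn ∉ B := fun h => hyn.2 ⟨hynA, h⟩
    set x1 := yn * x * yn⁻¹ with hx1def
    have hx1A : x1 ∈ A := mul_mem (mul_mem hynA hx) (inv_mem hynA)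
    have hx1B : x1 ∉ B := fun hb =>
      hxC yn⁻¹ ⟨x1, Subgroup.mem_inf.2 ⟨hx1A, hb⟩, by rw [hx1def]; group⟩
    have hl' : ReducedSeq A B l' :=
      ⟨fun g hg => hl.1 g (by simp [hg]), (List.isChain_append.1 hl.2).1⟩
    obtain ⟨g', hg'⟩ : ∃ g', l'.getLast? = some g' := by
      cases h : l'.getLast? with
      | none => exact absurd (List.getLast?_eq_none_iff.1 h) hl'nil
      | some g' => exact ⟨g', rfl⟩
    have hjunction : DiffFactors A B g' yn :=
      (List.isChain_append.1 hl.2).2.2 g' hg' yn (by simp)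
    have hg'A : g' ∉ A := fun h => hjunction.1 ⟨h, hynA⟩
    have hword := red_conj hl' ⟨Or.inl hx1A, fun ⟨_, h⟩ => hx1B h⟩ (fun g hg => by
      rw [hg', Option.some_inj] at hg
      subst hg
      exact ⟨fun ⟨h, _⟩ => hg'A h, fun ⟨_, h⟩ => hx1B h⟩)
    refine prod_not_mem_left hAB hword ?_ ?_
    · simp only [List.length_append, List.length_cons, List.length_map, List.length_reverse]
      omega
    · have hy' : l'.prod * yn = y := by
        rw [← hprod, List.prod_append, List.prod_singleton]
      have hkey : l'.prod * x1 * l'.prod⁻¹ = x := by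
        rw [hx1def]
        have : l'.prod * (yn * x * yn⁻¹) * l'.prod⁻¹ = y * x * y⁻¹ := by
          rw [← hy']; group
        rw [this, ← hcomm, mul_inv_cancel_right]
      rw [prod_conj, hkey]
      exact hx

end AmAux

/-- Commutativity theorem in an amalgam, case (ii): if `x` and `y` commute,
neither lies in a conjugate of `C = A ⊓ B`, and `x` lies in a conjugate
`g F g⁻¹` of a factor `F ∈ {A, B}`, then `y` lies in the same conjugate of the
same factor. -/
theorem amalgam_commute_same_conjugate_factor (A B : Subgroup Γ)
    (hAB : IsAmalgam A B) (x y : Γ) (hcomm : x * y = y * x)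
    (hxC : ∀ g : Γ, ¬∃ c ∈ A ⊓ B, x = g * c * g⁻¹)
    (hyC : ∀ g : Γ, ¬∃ c ∈ A ⊓ B, y = g * c * g⁻¹)
    (g : Γ) :
    ((∃ a ∈ A, x = g * a * g⁻¹) → ∃ a ∈ A, y = g * a * g⁻¹) ∧
    ((∃ b ∈ B, x = g * b * g⁻¹) → ∃ b ∈ B, y = g * b * g⁻¹) := by
  have hcomm' : (g⁻¹ * x * g) * (g⁻¹ * y * g) = (g⁻¹ * y * g) * (g⁻¹ * x * g) := by
    calc (g⁻¹ * x * g) * (g⁻¹ * y * g) = g⁻¹ * (x * y) * g := by group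
      _ = g⁻¹ * (y * x) * g := by rw [hcomm]
      _ = (g⁻¹ * y * g) * (g⁻¹ * x * g) := by group
  have hxC' : ∀ g' : Γ, ¬∃ c ∈ A ⊓ B, g⁻¹ * x * g = g' * c * g'⁻¹ := by
    rintro g' ⟨c, hc, he⟩
    refine hxC (g * g') ⟨c, hc, ?_⟩
    have hx' : x = g * (g⁻¹ * x * g) * g⁻¹ := by group
    rw [hx', he]; group
  have hyC' : ∀ g' : Γ, ¬∃ c ∈ A ⊓ B, g⁻¹ * y * g = g' * c * g'⁻¹ := by
    rintro g' ⟨c, hc, he⟩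
    refine hyC (g * g') ⟨c, hc, ?_⟩
    have hy' : y = g * (g⁻¹ * y * g) * g⁻¹ := by group
    rw [hy', he]; group
  have hxCs : ∀ g' : Γ, ¬∃ c ∈ B ⊓ A, g⁻¹ * x * g = g' * c * g'⁻¹ := by
    rintro g' ⟨c, hc, he⟩
    rw [Subgroup.mem_inf] at hc
    exact hxC' g' ⟨c, Subgroup.mem_inf.2 ⟨hc.2, hc.1⟩, he⟩
  have hyCs : ∀ g' : Γ, ¬∃ c ∈ B ⊓ A, g⁻¹ * y * g = g' * c * g'⁻¹ := by
    rintro g' ⟨c, hc, he⟩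
    rw [Subgroup.mem_inf] at hc
    exact hyC' g' ⟨c, Subgroup.mem_inf.2 ⟨hc.2, hc.1⟩, he⟩
  constructor
  · rintro ⟨a, ha, hxa⟩
    have hmem : g⁻¹ * x * g ∈ A := by
      have h2 : g⁻¹ * (g * a * g⁻¹) * g = a := by group
      rw [hxa, h2]
      exact ha
    have hyA := AmAux.mem_left_of_commute hAB hcomm' hxC' hyC' hmem
    exact ⟨g⁻¹ * y * g, hyA, by group⟩
  · rintro ⟨b, hb, hxb⟩
    have hmem : g⁻¹ * x * g ∈ B := by
      have h2 : g⁻¹ * (g * b * g⁻¹) * g = b := by group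
      rw [hxb, h2]
      exact hb
    have hyB := AmAux.mem_left_of_commute (AmAux.amalgam_swap hAB) hcomm' hxCs hyCs hmem
    exact ⟨g⁻¹ * y * g, hyB, by group⟩
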